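/- Let 0 < α < 2 and let C₀ > 2 be a constant with the property that for all C ≥ C₀ and z ∈ 𝔻: Re[1/((1−z)Log(C/(1−z)))] > 1/(2 log(C/2)) and Re[z/((1−z)Log(C/(1−z)))] > −1/(2 log(C/2)). Choose β > 0 and c > 0 with c ≤ 1/log C₀ and α + cβ/(1 − c·log 2) < 2, and define g(z) = z·(1−z)^{−α}·(1 + c·Log(1/(1−z)))^{β} on 𝔻, using principal branches of the logarithm and powers (well defined since Re(1 + c·Log(1/(1−z))) > 1 − c·log 2 > 0). Then g(0) = 0, g'(0) = 1, g(z) ≠ 0 for 0 < |z| < 1, and Re( z·g'(z)/g(z) ) > 1 − α/2 − β/(2/c − 2 log 2) > 0 for all 0 < |z| < 1 (so g is starlike); moreover M(r, g) ≍ (1−r)^{−α}·(log(1/(1−r)))^{β} as r → 1−, i.e. there exist 0 < A ≤ B and r₀ ∈ (0, 1) with A·(1−r)^{−α}(log(1/(1−r)))^{β} ≤ M(r, g) ≤ B·(1−r)^{−α}(log(1/(1−r)))^{β} for all r₀ ≤ r < 1. -/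

import Mathlib

open Set Metric

/-- The maximum modulus `M(r, f) = max_{|z| = r} |f(z)|`. -/
noncomputable def maxModulus (f : ℂ → ℂ) (r : ℝ) : ℝ :=
  sSup ((fun z => ‖f z‖) '' sphere (0 : ℂ) r)

namespace SLaux

lemma ure {z : ℂ} (hz : ‖z‖ < 1) : 0 < ((1:ℂ) - z).re := by
  have := Complex.re_le_norm z
  simp only [Complex.sub_re, Complex.one_re]
  linarith

lemma une {z : ℂ} (hz : ‖z‖ < 1) : (1:ℂ) - z ≠ 0 := by
  intro h
  have h2 := ure hz
  rw [h] at h2; simp at h2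

lemma uslit {z : ℂ} (hz : ‖z‖ < 1) : (1:ℂ) - z ∈ Complex.slitPlane :=
  Complex.mem_slitPlane_iff.mpr (Or.inl (ure hz))

lemma uinvslit {z : ℂ} (hz : ‖z‖ < 1) : ((1:ℂ) - z)⁻¹ ∈ Complex.slitPlane := by
  refine Complex.mem_slitPlane_iff.mpr (Or.inl ?_)
  rw [Complex.inv_re]
  exact div_pos (ure hz) (Complex.normSq_pos.mpr (une hz))

lemma uabs_pos {z : ℂ} (hz : ‖z‖ < 1) : 0 < ‖(1:ℂ) - z‖ :=
  norm_pos_iff.mpr (une hz)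

lemma uabs_lt_two {z : ℂ} (hz : ‖z‖ < 1) : ‖(1:ℂ) - z‖ < 2 := by
  calc ‖(1:ℂ) - z‖ ≤ ‖(1:ℂ)‖ + ‖z‖ := norm_sub_le 1 z
  _ < 2 := by rw [norm_one]; linarith

lemma wre_eq (c : ℝ) {z : ℂ} :
    (1 + (c:ℂ) * Complex.log ((1 - z)⁻¹)).re = 1 - c * Real.log ‖1 - z‖ := by
  simp [Complex.add_re, Complex.re_ofReal_mul, Complex.log_re, map_inv₀, Real.log_inv]
  ring

lemma wre {c : ℝ} (hc : 0 < c) (hclog2 : c * Real.log 2 < 1) {z : ℂ}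
    (hz : ‖z‖ < 1) : 0 < (1 + (c:ℂ) * Complex.log ((1 - z)⁻¹)).re := by
  rw [wre_eq]
  have hlog : Real.log ‖1 - z‖ < Real.log 2 :=
    Real.log_lt_log (uabs_pos hz) (uabs_lt_two hz)
  nlinarith

lemma wslit {c : ℝ} (hc : 0 < c) (hclog2 : c * Real.log 2 < 1) {z : ℂ}
    (hz : ‖z‖ < 1) : 1 + (c:ℂ) * Complex.log ((1 - z)⁻¹) ∈ Complex.slitPlane :=
  Complex.mem_slitPlane_iff.mpr (Or.inl (wre hc hclog2 hz))

lemma wne {c : ℝ} (hc : 0 < c) (hclog2 : c * Real.log 2 < 1) {z : ℂ}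
    (hz : ‖z‖ < 1) : 1 + (c:ℂ) * Complex.log ((1 - z)⁻¹) ≠ 0 := by
  intro h
  have h2 := wre hc hclog2 hz
  rw [h] at h2; simp at h2

lemma cpow_ne_zero' {x : ℂ} (hx : x ≠ 0) (y : ℂ) : x ^ y ≠ 0 := by
  rw [Complex.cpow_def_of_ne_zero hx]; exact Complex.exp_ne_zero _

lemma re_div_one_sub {z : ℂ} (hz : ‖z‖ < 1) : -(1/2 : ℝ) < (z / (1 - z)).re := by
  have hne := une hz
  have key : z / (1 - z) = 1 / (1 - z) - 1 := by field_simp; ring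
  rw [key]
  have h1 : ((1:ℂ) / (1 - z)).re = ((1:ℂ) - z).re / Complex.normSq (1 - z) := by
    rw [one_div, Complex.inv_re]
  have hsq : Complex.normSq z < 1 := by
    have := Complex.sq_norm z
    nlinarith [norm_nonneg z]
  have hnpos : 0 < Complex.normSq ((1:ℂ) - z) := Complex.normSq_pos.mpr hne
  have h2 : (1/2 : ℝ) < ((1:ℂ) - z).re / Complex.normSq (1 - z) := by
    rw [lt_div_iff₀ hnpos]
    have e1 : Complex.normSq ((1:ℂ) - z) = (1 - z.re)^2 + z.im^2 := by
      simp [Complex.normSq_apply, Complex.sub_re, Complex.sub_im]; ring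
    have e2 : ((1:ℂ) - z).re = 1 - z.re := by simp
    have e3 : Complex.normSq z = z.re^2 + z.im^2 := by simp [Complex.normSq_apply]; ring
    rw [e1, e2]
    nlinarith
  simp only [Complex.sub_re, Complex.one_re] at h2 ⊢
  rw [h1]
  simp only [Complex.sub_re, Complex.one_re]
  linarith

lemma hasDerivAt_g (α β c : ℝ) {z : ℂ} (hc : 0 < c) (hclog2 : c * Real.log 2 < 1)
    (hz : ‖z‖ < 1) :
    HasDerivAt (fun z : ℂ => z * ((1 - z) ^ (-(α : ℂ))) *
        ((1 + (c : ℂ) * Complex.log ((1 - z)⁻¹)) ^ (β : ℂ)))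
      ((1 * ((1 - z) ^ (-(α : ℂ))) + z * (-(α:ℂ) * (1 - z) ^ (-(α:ℂ) - 1) * (-1))) *
          ((1 + (c : ℂ) * Complex.log ((1 - z)⁻¹)) ^ (β : ℂ)) +
        z * ((1 - z) ^ (-(α : ℂ))) *
          ((β:ℂ) * (1 + (c : ℂ) * Complex.log ((1 - z)⁻¹)) ^ ((β:ℂ) - 1) *
            ((c:ℂ) * (-(-1) / ((1 - z) ^ 2) / (1 - z)⁻¹)))) z := by
  have h1 : HasDerivAt (fun z : ℂ => 1 - z) (-1) z := by
    simpa using (hasDerivAt_id z).const_sub 1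
  have hA : HasDerivAt (fun z : ℂ => (1 - z) ^ (-(α : ℂ)))
      (-(α:ℂ) * (1 - z) ^ (-(α:ℂ) - 1) * (-1)) z := h1.cpow_const (uslit hz)
  have hinv : HasDerivAt (fun z : ℂ => (1 - z)⁻¹) (-(-1) / ((1 - z) ^ 2)) z := h1.inv (une hz)
  have hlog : HasDerivAt (fun z : ℂ => Complex.log ((1 - z)⁻¹))
      (-(-1) / ((1 - z) ^ 2) / (1 - z)⁻¹) z := hinv.clog (uinvslit hz)
  have hw : HasDerivAt (fun z : ℂ => 1 + (c : ℂ) * Complex.log ((1 - z)⁻¹))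
      ((c:ℂ) * (-(-1) / ((1 - z) ^ 2) / (1 - z)⁻¹)) z := (hlog.const_mul (c:ℂ)).const_add 1
  have hB : HasDerivAt (fun z : ℂ => (1 + (c : ℂ) * Complex.log ((1 - z)⁻¹)) ^ (β : ℂ))
      ((β:ℂ) * (1 + (c : ℂ) * Complex.log ((1 - z)⁻¹)) ^ ((β:ℂ) - 1) *
        ((c:ℂ) * (-(-1) / ((1 - z) ^ 2) / (1 - z)⁻¹))) z := hw.cpow_const (wslit hc hclog2 hz)
  exact ((hasDerivAt_id z).mul hA).mul hB

lemma alg (α β c : ℝ) (z w : ℂ) (hz0 : z ≠ 0) (hu : 1 - z ≠ 0) (hw : w ≠ 0) :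
    z * ((1 * ((1-z)^(-(α:ℂ))) + z * (-(α:ℂ)*(1-z)^(-(α:ℂ)-1)*(-1))) * (w^(β:ℂ))
       + z * ((1-z)^(-(α:ℂ))) * ((β:ℂ) * w^((β:ℂ)-1) * ((c:ℂ) * (-(-1)/((1-z)^2)/(1-z)⁻¹))))
      / (z * ((1-z)^(-(α:ℂ))) * (w^(β:ℂ)))
    = 1 + (α:ℂ)*(z/(1-z)) + (β:ℂ)*((c:ℂ)*(z/((1-z)*w))) := by
  have hp := cpow_ne_zero' hu (-(α:ℂ))
  have hq := cpow_ne_zero' hw (β:ℂ)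
  have e1 : (1-z)^(-(α:ℂ)-1) = (1-z)^(-(α:ℂ)) / (1-z) := by
    rw [Complex.cpow_sub _ _ hu, Complex.cpow_one]
  have e2 : w^((β:ℂ)-1) = w^(β:ℂ) / w := by rw [Complex.cpow_sub _ _ hw, Complex.cpow_one]
  have e3 : (-(-1:ℂ))/((1-z)^2)/(1-z)⁻¹ = (1-z)⁻¹ := by
    field_simp
  rw [e1, e2, e3, div_eq_iff (mul_ne_zero (mul_ne_zero hz0 hp) hq)]
  field_simp

end SLaux

set_option maxHeartbeats 2000000 in
/-- for `0 < α < 2`, a constant `C₀ > 2` with the half-plane estimates of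
Lemma 4.3, and `β, c > 0` with `c ≤ 1/log C₀` and `α + cβ/(1 − c log 2) < 2`, the
function `g(z) = z·(1−z)^{−α}·(1 + c·Log(1/(1−z)))^{β}` (principal branches) is
normalized starlike with `Re(z g'/g) > 1 − α/2 − β/(2/c − 2 log 2) > 0`, and
`M(r, g) ≍ (1−r)^{−α}(log(1/(1−r)))^{β}` as `r → 1−`. -/
theorem starlike_example_with_log_growth (α β c : ℝ)
    (hα : 0 < α) (hα2 : α < 2) (hβ : 0 < β) (hc : 0 < c)
    (C₀ : ℝ) (hC₀ : 2 < C₀)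
    (hC₀est : ∀ C : ℝ, C₀ ≤ C → ∀ z ∈ ball (0 : ℂ) 1,
      1 / (2 * Real.log (C / 2)) <
        (1 / ((1 - z) * Complex.log ((C : ℂ) / (1 - z)))).re ∧
      -(1 / (2 * Real.log (C / 2))) <
        (z / ((1 - z) * Complex.log ((C : ℂ) / (1 - z)))).re)
    (hcC₀ : c ≤ 1 / Real.log C₀)
    (hsmall : α + c * β / (1 - c * Real.log 2) < 2)
    (g : ℂ → ℂ)
    (hg : g = fun z : ℂ => z * ((1 - z) ^ (-(α : ℂ))) *
      ((1 + (c : ℂ) * Complex.log ((1 - z)⁻¹)) ^ (β : ℂ))) :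
    g 0 = 0 ∧ deriv g 0 = 1 ∧
    (∀ z ∈ ball (0 : ℂ) 1, z ≠ 0 → g z ≠ 0) ∧
    (0 : ℝ) < 1 - α / 2 - β / (2 / c - 2 * Real.log 2) ∧
    (∀ z ∈ ball (0 : ℂ) 1, z ≠ 0 →
      1 - α / 2 - β / (2 / c - 2 * Real.log 2) < (z * deriv g z / g z).re) ∧
    ∃ A B r₀ : ℝ, 0 < A ∧ A ≤ B ∧ r₀ ∈ Set.Ioo (0 : ℝ) 1 ∧
      ∀ r : ℝ, r₀ ≤ r → r < 1 →
        A * ((1 - r) ^ (-α) * Real.log (1 / (1 - r)) ^ β) ≤ maxModulus g r ∧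
        maxModulus g r ≤ B * ((1 - r) ^ (-α) * Real.log (1 / (1 - r)) ^ β) := by
  have hlog2pos : (0:ℝ) < Real.log 2 := Real.log_pos one_lt_two
  have hlogC₀ : Real.log 2 < Real.log C₀ := Real.log_lt_log two_pos hC₀
  have hcC : c * Real.log C₀ ≤ 1 := by
    rw [le_div_iff₀ (by linarith)] at hcC₀
    linarith
  have hclog2 : c * Real.log 2 < 1 := by nlinarith
  have hd : 0 < 1 - c * Real.log 2 := by linarith
  have hden_eq : 2 / c - 2 * Real.log 2 = 2 * (1 - c * Real.log 2) / c := by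
    field_simp
  have hden : 0 < 2 / c - 2 * Real.log 2 := by rw [hden_eq]; positivity
  have hpos4 : (0:ℝ) < 1 - α / 2 - β / (2 / c - 2 * Real.log 2) := by
    have e : β / (2 / c - 2 * Real.log 2) = c * β / (1 - c * Real.log 2) / 2 := by
      rw [hden_eq]
      field_simp
    rw [e]; linarith
  subst hg
  refine ⟨by simp, ?_, ?_, hpos4, ?_, ?_⟩
  · -- deriv at 0
    have h0 : ‖(0:ℂ)‖ < 1 := by simp
    rw [(SLaux.hasDerivAt_g α β c hc hclog2 h0).deriv]
    norm_num [Complex.log_one, Complex.one_cpow]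
  · -- nonvanishing
    intro z hzb hz0
    have hz : ‖z‖ < 1 := by
      simpa using mem_ball_zero_iff.mp hzb
    exact mul_ne_zero (mul_ne_zero hz0 (SLaux.cpow_ne_zero' (SLaux.une hz) _))
      (SLaux.cpow_ne_zero' (SLaux.wne hc hclog2 hz) _)
  · -- main starlikeness inequality
    intro z hzb hz0
    have hz : ‖z‖ < 1 := by
      simpa using mem_ball_zero_iff.mp hzb
    rw [(SLaux.hasDerivAt_g α β c hc hclog2 hz).deriv]
    simp only []
    rw [SLaux.alg α β c z _ hz0 (SLaux.une hz) (SLaux.wne hc hclog2 hz)]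
    rw [Complex.add_re, Complex.add_re, Complex.one_re, Complex.re_ofReal_mul,
      Complex.re_ofReal_mul]
    set L := Complex.log ((1 - z)⁻¹) with hL
    have h1 : -(1/2 : ℝ) < (z / (1 - z)).re := SLaux.re_div_one_sub hz
    set C : ℝ := Real.exp (1/c) with hCdef
    have hCge : C₀ ≤ C := by
      have hle : Real.log C₀ ≤ 1/c := by
        rw [le_div_iff₀ hc]; linarith
      calc C₀ = Real.exp (Real.log C₀) := (Real.exp_log (by linarith)).symm
      _ ≤ C := Real.exp_le_exp.mpr hle
    have hest := (hC₀est C hCge z hzb).2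
    have hlogC2 : Real.log (C / 2) = 1/c - Real.log 2 := by
      rw [Real.log_div (by positivity) two_ne_zero, hCdef, Real.log_exp]
    have hwc : 1 + (c:ℂ) * L = (c:ℂ) * Complex.log ((C:ℂ) / (1 - z)) := by
      rw [div_eq_mul_inv, Complex.log_ofReal_mul (Real.exp_pos _) (inv_ne_zero (SLaux.une hz)),
        Real.log_exp, hL]
      have hcne : (c:ℂ) ≠ 0 := Complex.ofReal_ne_zero.mpr hc.ne'
      push_cast
      field_simp
    have hrel : z / ((1 - z) * (1 + (c:ℂ) * L)) =
        ((c⁻¹ : ℝ) : ℂ) * (z / ((1 - z) * Complex.log ((C:ℂ) / (1 - z)))) := by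
      rw [hwc]
      push_cast
      simp only [div_eq_mul_inv, mul_inv]
      ring
    rw [hrel]
    simp only [Complex.re_ofReal_mul]
    set E := (z / ((1 - z) * Complex.log ((C:ℂ) / (1 - z)))).re
    have hE : -(1 / (2 * (1/c - Real.log 2))) < E := by
      rw [← hlogC2]; exact hest
    have hc1 : 0 < 1/c - Real.log 2 := by
      have : c * (1/c - Real.log 2) = 1 - c * Real.log 2 := by field_simp
      nlinarith
    have hαterm : -(α/2) < α * (z / (1 - z)).re := by nlinarith
    have hβterm : -(β / (2 / c - 2 * Real.log 2)) < β * (c * (c⁻¹ * E)) := by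
      have hcc : c * (c⁻¹ * E) = E := by field_simp
      rw [hcc]
      have e : β / (2 / c - 2 * Real.log 2) = β * (1 / (2 * (1/c - Real.log 2))) := by
        rw [show 2 / c - 2 * Real.log 2 = 2 * (1/c - Real.log 2) by ring]
        ring
      rw [e]
      nlinarith
    linarith
  · -- growth of maximum modulus
    set T : ℝ := 1 + Real.pi + Real.log 2 with hT
    have hpi : 0 < Real.pi := Real.pi_pos
    have hTpos : 0 < T := by rw [hT]; positivity
    set r₀ : ℝ := 1 - Real.exp (-T) with hr₀
    have hexp1 : Real.exp (-T) < 1 := by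
      rw [Real.exp_lt_one_iff]
      linarith
    have hexp0 : 0 < Real.exp (-T) := Real.exp_pos _
    have hr₀pos : 0 < r₀ := by rw [hr₀]; linarith
    have hr₀lt1 : r₀ < 1 := by rw [hr₀]; linarith
    refine ⟨r₀ * c ^ β, (1 + 2*c) ^ β, r₀, by positivity, ?_, ⟨hr₀pos, hr₀lt1⟩, ?_⟩
    · calc r₀ * c ^ β ≤ 1 * (1 + 2*c) ^ β :=
          mul_le_mul hr₀lt1.le (Real.rpow_le_rpow hc.le (by linarith) hβ.le)
            (Real.rpow_nonneg hc.le β) one_pos.le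
      _ = (1 + 2*c) ^ β := one_mul _
    intro r hrr₀ hr1
    unfold maxModulus
    have hr0 : 0 < r := lt_of_lt_of_le hr₀pos hrr₀
    have h1r : 0 < 1 - r := by linarith
    set t : ℝ := Real.log (1 / (1 - r)) with htdef
    have ht_eq : t = -Real.log (1 - r) := by rw [htdef, one_div, Real.log_inv]
    have htT : T ≤ t := by
      have hle : 1 - r ≤ Real.exp (-T) := by
        rw [hr₀] at hrr₀; linarith
      have h2 := Real.log_le_log h1r hle
      rw [Real.log_exp] at h2
      linarith
    have htpos : 0 < t := lt_of_lt_of_le hTpos htT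
    have hub : ∀ x ∈ (fun z => ‖(fun z : ℂ => z * ((1 - z) ^ (-(α : ℂ))) *
        ((1 + (c : ℂ) * Complex.log ((1 - z)⁻¹)) ^ (β : ℂ))) z‖) '' sphere (0 : ℂ) r,
        x ≤ (1 + 2*c) ^ β * ((1 - r) ^ (-α) * t ^ β) := by
      rintro x ⟨z, hzs, rfl⟩
      simp only []
      have hzabs : ‖z‖ = r := by
        simpa using mem_sphere_zero_iff_norm.mp hzs
      have hzlt : ‖z‖ < 1 := by rw [hzabs]; exact hr1
      rw [norm_mul, norm_mul]
      set L := Complex.log ((1 - z)⁻¹) with hLdef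
      have ha : ‖(1 - z) ^ (-(α:ℂ))‖ = ‖1 - z‖ ^ (-α) := by
        rw [Complex.norm_cpow_of_ne_zero (SLaux.une hzlt)]
        simp
      have hb : ‖(1 + (c:ℂ) * L) ^ (β:ℂ)‖ = ‖1 + (c:ℂ) * L‖ ^ β := by
        rw [Complex.norm_cpow_of_ne_zero (SLaux.wne hc hclog2 hzlt)]
        simp
        rfl
      have hge : 1 - r ≤ ‖1 - z‖ := by
        have h := norm_sub_norm_le (1:ℂ) z
        simp only [norm_one] at h
        rw [hzabs] at h
        exact h
      have hLre : L.re = -Real.log ‖1 - z‖ := by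
        rw [hLdef, Complex.log_re, norm_inv, Real.log_inv]
      have him : |L.im| ≤ Real.pi := by
        rw [hLdef, Complex.log_im]; exact Complex.abs_arg_le_pi _
      have hlogu_le : Real.log ‖1 - z‖ ≤ Real.log 2 :=
        Real.log_le_log (SLaux.uabs_pos hzlt) (SLaux.uabs_lt_two hzlt).le
      have hlogu_ge : Real.log (1 - r) ≤ Real.log ‖1 - z‖ :=
        Real.log_le_log h1r hge
      have hLabs : ‖L‖ ≤ t + Real.log 2 + Real.pi := by
        have h3 := Complex.norm_le_abs_re_add_abs_im L
        have h4 : |L.re| ≤ t + Real.log 2 := by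
          rw [hLre, abs_le]
          constructor
          · simp only [neg_le_neg_iff]
            linarith
          · linarith
        linarith
      have h6 : Real.log 2 + Real.pi ≤ t := by
        rw [hT] at htT; linarith
      have hwabs : ‖1 + (c:ℂ) * L‖ ≤ (1 + 2*c) * t := by
        have h5 : ‖1 + (c:ℂ) * L‖ ≤ 1 + c * ‖L‖ := by
          calc ‖1 + (c:ℂ) * L‖ ≤ ‖(1:ℂ)‖ + ‖(c:ℂ) * L‖ :=
            norm_add_le _ _
          _ = 1 + c * ‖L‖ := by
            rw [norm_one, norm_mul, Complex.norm_real, Real.norm_eq_abs, abs_of_pos hc]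
        have h7 := mul_le_mul_of_nonneg_left hLabs hc.le
        have h8 := mul_le_mul_of_nonneg_left h6 hc.le
        have h9 : (1:ℝ) ≤ t := by rw [hT] at htT; linarith
        linarith
      have hW : ‖1 + (c:ℂ) * L‖ ^ β ≤ (1 + 2*c)^β * t^β := by
        calc ‖1 + (c:ℂ) * L‖ ^ β ≤ ((1 + 2*c) * t) ^ β :=
          Real.rpow_le_rpow (norm_nonneg _) hwabs hβ.le
        _ = (1 + 2*c)^β * t^β := Real.mul_rpow (by linarith) htpos.le
      have hA : ‖1 - z‖ ^ (-α) ≤ (1 - r) ^ (-α) :=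
        Real.rpow_le_rpow_of_nonpos h1r hge (by linarith)
      rw [hzabs, ha, hb]
      calc r * (‖1 - z‖ ^ (-α)) * (‖1 + (c:ℂ)*L‖ ^ β)
          ≤ 1 * ((1 - r) ^ (-α)) * ((1 + 2*c)^β * t^β) :=
            mul_le_mul (mul_le_mul hr1.le hA
                (Real.rpow_nonneg (norm_nonneg _) _) one_pos.le)
              hW (Real.rpow_nonneg (norm_nonneg _) _) (by positivity)
      _ = (1 + 2*c)^β * ((1 - r)^(-α) * t^β) := by ring
    constructor
    · -- lower bound
      have hmem : ((r:ℂ)) ∈ sphere (0:ℂ) r := by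
        simp [mem_sphere_zero_iff_norm,
          abs_of_pos hr0]
      have e0 : (1 : ℂ) - (r:ℂ) = ((1 - r : ℝ) : ℂ) := by push_cast; ring
      have e1 : Complex.log ((1 - (r:ℂ))⁻¹) = ((t : ℝ) : ℂ) := by
        rw [e0, ← Complex.ofReal_inv, ← Complex.ofReal_log (by positivity : (0:ℝ) ≤ (1-r)⁻¹)]
        norm_cast
        rw [Real.log_inv]
        exact ht_eq.symm
      have e2 : (1:ℂ) + (c:ℂ) * Complex.log ((1 - (r:ℂ))⁻¹) = ((1 + c * t : ℝ) : ℂ) := by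
        rw [e1]; push_cast; ring
      have e3 : ((1 - r:ℝ):ℂ) ^ (-(α:ℂ)) = (((1-r)^(-α) : ℝ) : ℂ) := by
        rw [show -(α:ℂ) = ((-α : ℝ):ℂ) by push_cast; ring, ← Complex.ofReal_cpow h1r.le]
      have e4 : ((1 + c*t:ℝ):ℂ) ^ (β:ℂ) = (((1+c*t)^β : ℝ):ℂ) :=
        (Complex.ofReal_cpow (by positivity) β).symm
      have hgr : ‖(r:ℂ) * ((1 - (r:ℂ)) ^ (-(α:ℂ))) *
          ((1 + (c:ℂ) * Complex.log ((1 - (r:ℂ))⁻¹)) ^ (β:ℂ))‖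
          = r * (1 - r)^(-α) * (1 + c*t)^β := by
        rw [e2, e0, e3, e4, ← Complex.ofReal_mul, ← Complex.ofReal_mul,
          Complex.norm_real, Real.norm_eq_abs, abs_of_nonneg (by positivity)]
      have h1 : c^β * t^β ≤ (1 + c*t)^β := by
        rw [← Real.mul_rpow hc.le htpos.le]
        have hct : 0 < c * t := mul_pos hc htpos
        exact Real.rpow_le_rpow (by positivity) (by linarith) hβ.le
      have hlow : r₀ * c^β * ((1 - r)^(-α) * t^β) ≤ r * (1 - r)^(-α) * (1 + c*t)^β := by
        calc r₀ * c^β * ((1-r)^(-α) * t^β) = r₀ * ((1-r)^(-α) * (c^β * t^β)) := by ring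
        _ ≤ r * ((1-r)^(-α) * (1 + c*t)^β) := by
            apply mul_le_mul hrr₀ (mul_le_mul_of_nonneg_left h1 (by positivity))
              (by positivity) (by linarith)
        _ = r * (1-r)^(-α) * (1+c*t)^β := by ring
      rw [← hgr] at hlow
      exact le_trans hlow (le_csSup ⟨_, fun x hx => hub x hx⟩ ⟨(r:ℂ), hmem, rfl⟩)
    · exact Real.sSup_le hub (by positivity)
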